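/- arXiv:2504.03407 — 4 statements merged into one kernel-verified Lean document; each statement's English description precedes it below -/
import Mathlib

section
/- Let uⁿ and u^{n+1} be Gaussian wave packets on ℝ^d with parameters (qⁿ, pⁿ, Cⁿ, ζⁿ) and (q^{n+1}, p^{n+1}, C^{n+1}, ζ^{n+1}) for the same ε > 0, and let Qⁿ, Q^{n+1} ∈ ℂ^{d×d} be invertible matrices with Cⁿ_I = (Qⁿ (Qⁿ)*)⁻¹ and C^{n+1}_I = (Q^{n+1} (Q^{n+1})*)⁻¹. Then the phase update formula ζ_I^{n+1} = ζ_I^{n} + (ε/2)(ln|det Q^{n+1}| − ln|det Q^{n}|) holds if and only if ‖uⁿ‖_{L²(ℝ^d)} = ‖u^{n+1}‖_{L²(ℝ^d)}. -/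
open MeasureTheory Matrix Complex

noncomputable section

/-- The Gaussian wave packet on `ℝ^d` with parameters `(q, p, C, ζ)` and
semiclassical parameter `ε`. -/
def gwp (d : ℕ) (ε : ℝ) (q p : Fin d → ℝ) (C : Matrix (Fin d) (Fin d) ℂ) (ζ : ℂ)
    (x : Fin d → ℝ) : ℂ :=
  Complex.exp ((Complex.I / (ε : ℂ)) *
    ((1 / 2 : ℂ) * ((fun i => ((x i - q i : ℝ) : ℂ)) ⬝ᵥ
        C.mulVec (fun i => ((x i - q i : ℝ) : ℂ)))
      + (fun i => ((x i - q i : ℝ) : ℂ)) ⬝ᵥ (fun i => ((p i : ℝ) : ℂ)) + ζ))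

lemma gwp_aux_im_quad {d : ℕ} (C : Matrix (Fin d) (Fin d) ℂ) (v : Fin d → ℝ) :
    ((fun i => (v i : ℂ)) ⬝ᵥ C.mulVec (fun i => (v i : ℂ))).im
      = v ⬝ᵥ (C.map Complex.im).mulVec v := by
  simp [dotProduct, Matrix.mulVec, Complex.im_sum, Finset.mul_sum, Matrix.map_apply]

lemma gwp_aux_norm_exp (ε : ℝ) (w : ℂ) :
    ‖Complex.exp (Complex.I / (ε:ℂ) * w)‖ ^ 2 = Real.exp (-2 * w.im / ε) := by
  rw [Complex.norm_exp, ← Real.exp_nat_mul]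
  congr 1
  have : (Complex.I / (ε:ℂ) * w).re = -w.im / ε := by
    simp [Complex.div_re, Complex.div_im, Complex.mul_re]
    ring
  rw [this]; ring

lemma gwp_aux_psd_det_nonneg {d : ℕ} {B : Matrix (Fin d) (Fin d) ℝ} (hB : B.PosSemidef) :
    0 ≤ B.det := by
  rw [hB.1.det_eq_prod_eigenvalues]
  exact Finset.prod_nonneg fun i _ => by exact_mod_cast hB.eigenvalues_nonneg i

lemma gwp_aux_integral_comp_mulVec {d : ℕ} {B : Matrix (Fin d) (Fin d) ℝ} (hB : B.det ≠ 0)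
    (g : (Fin d → ℝ) → ℝ) :
    ∫ x : Fin d → ℝ, g (B.mulVec x) = |B.det|⁻¹ * ∫ y : Fin d → ℝ, g y := by
  have hinv : Invertible B := B.invertibleOfIsUnitDet (isUnit_iff_ne_zero.mpr hB)
  let e := B.toLinearEquiv' hinv
  let em := (e.toContinuousLinearEquiv).toHomeomorph.toMeasurableEquiv
  have hcoe : ⇑em = B.mulVec := by
    ext x i
    simp [em, e, Matrix.toLinearEquiv', Matrix.toLin'_apply]
  have hdet : LinearMap.det (Matrix.toLin' B) = B.det := LinearMap.det_toLin' B
  have hmap : Measure.map (⇑em) (volume : Measure (Fin d → ℝ))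
      = ENNReal.ofReal |B.det|⁻¹ • volume := by
    have : Measure.map (Matrix.toLin' B) (volume : Measure (Fin d → ℝ))
        = ENNReal.ofReal (|(LinearMap.det (Matrix.toLin' B))⁻¹|) • volume :=
      Measure.map_linearMap_addHaar_pi_eq_smul_addHaar (by rw [hdet]; exact hB) _
    rw [hcoe]
    have h2 : ⇑(Matrix.toLin' B) = B.mulVec := by ext x; simp [Matrix.toLin'_apply]
    rw [h2] at this
    rw [this, hdet, abs_inv]
  calc ∫ x : Fin d → ℝ, g (B.mulVec x) = ∫ x, g (em x) := by rw [hcoe]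
    _ = ∫ y, g y ∂(Measure.map (⇑em) volume) := (MeasureTheory.integral_map_equiv em g).symm
    _ = |B.det|⁻¹ * ∫ y, g y := by
        rw [hmap, integral_smul_measure, ENNReal.toReal_ofReal (by positivity)]
        simp [smul_eq_mul]

open scoped MatrixOrder Matrix.Norms.L2Operator in
lemma gwp_aux_integral_exp_neg_quad {d : ℕ} {A : Matrix (Fin d) (Fin d) ℝ} (hA : A.PosDef) :
    ∫ x : Fin d → ℝ, Real.exp (-(x ⬝ᵥ A.mulVec x))
      = Real.sqrt Real.pi ^ d / Real.sqrt A.det := by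
  set B := CFC.sqrt A with hBdef
  have hBsd : B.PosSemidef := Matrix.nonneg_iff_posSemidef.mp (CFC.sqrt_nonneg A)
  have hBsym : Bᵀ = B := hBsd.1
  have hBB : B * B = A := CFC.sqrt_mul_sqrt_self A hA.posSemidef.nonneg
  have hdet2 : B.det * B.det = A.det := by rw [← Matrix.det_mul, hBB]
  have hBdnn : 0 ≤ B.det := gwp_aux_psd_det_nonneg hBsd
  have hAdpos : 0 < A.det := hA.det_pos
  have hBdpos : 0 < B.det := by nlinarith
  have hsqrt : Real.sqrt A.det = B.det := by
    rw [← hdet2, Real.sqrt_mul_self hBdnn]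
  have hquad : ∀ x : Fin d → ℝ, x ⬝ᵥ A.mulVec x = (B.mulVec x) ⬝ᵥ (B.mulVec x) := by
    intro x
    rw [← hBB, ← Matrix.mulVec_mulVec, Matrix.dotProduct_mulVec]
    congr 1
    rw [← Matrix.mulVec_transpose, hBsym]
  have key : (∫ x : Fin d → ℝ, Real.exp (-(x ⬝ᵥ A.mulVec x)))
      = |B.det|⁻¹ * ∫ y : Fin d → ℝ, Real.exp (-(y ⬝ᵥ y)) := by
    rw [← gwp_aux_integral_comp_mulVec hBdpos.ne' (fun y => Real.exp (-(y ⬝ᵥ y)))]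
    simp_rw [hquad]
  rw [key]
  have hgauss : (∫ y : Fin d → ℝ, Real.exp (-(y ⬝ᵥ y))) = Real.sqrt Real.pi ^ d := by
    have h0 : ∀ y : Fin d → ℝ, Real.exp (-(y ⬝ᵥ y)) = ∏ i, Real.exp (-(y i)^2) := by
      intro y
      rw [← Real.exp_sum]
      congr 1
      simp [dotProduct, pow_two]
    simp_rw [h0]
    rw [MeasureTheory.integral_fintype_prod_volume_eq_pow (ι := Fin d) (f := fun t : ℝ => Real.exp (-t^2))]
    have h1 : (∫ t : ℝ, Real.exp (-t^2)) = Real.sqrt Real.pi := by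
      have := integral_gaussian 1
      simpa using this
    rw [h1]; simp
  rw [hgauss, hsqrt, abs_of_pos hBdpos]
  ring

/-- Closed form for the squared `L²` norm of a Gaussian wave packet. -/
lemma gwp_l2 {d : ℕ} (ε : ℝ) (hε : 0 < ε) (q p : Fin d → ℝ)
    (C : Matrix (Fin d) (Fin d) ℂ) (ζ : ℂ) (hCI : (C.map Complex.im).PosDef) :
    ∫ x : Fin d → ℝ, ‖gwp d ε q p C ζ x‖ ^ 2
      = Real.exp (-2 * ζ.im / ε) *
        (Real.sqrt Real.pi ^ d / Real.sqrt ((ε⁻¹) ^ d * (C.map Complex.im).det)) := by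
  set A : Matrix (Fin d) (Fin d) ℝ := ε⁻¹ • (C.map Complex.im) with hAdef
  have hApos : A.PosDef := by
    refine Matrix.PosDef.of_dotProduct_mulVec_pos ?_ ?_
    · show Aᴴ = A
      rw [hAdef, Matrix.conjTranspose_smul, hCI.1.eq, star_trivial]
    · intro x hx
      have h1 := hCI.dotProduct_mulVec_pos hx
      rw [hAdef, Matrix.smul_mulVec, dotProduct_smul, smul_eq_mul]
      have : (0:ℝ) < ε⁻¹ := by positivity
      exact mul_pos this h1
  have hpt : ∀ x : Fin d → ℝ, ‖gwp d ε q p C ζ x‖ ^ 2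
      = Real.exp (-((x - q) ⬝ᵥ A.mulVec (x - q))) * Real.exp (-2 * ζ.im / ε) := by
    intro x
    rw [gwp, gwp_aux_norm_exp, ← Real.exp_add]
    congr 1
    have him0 : ((fun i => ((x i - q i : ℝ) : ℂ)) ⬝ᵥ (fun i => ((p i : ℝ) : ℂ))).im = 0 := by
      simp [dotProduct, Complex.im_sum]
    have hquadim := gwp_aux_im_quad C (fun i => x i - q i)
    rw [Complex.add_im, Complex.add_im, Complex.mul_im, him0, hquadim]
    have hA : (x - q) ⬝ᵥ A.mulVec (x - q)
        = ε⁻¹ * ((fun i => x i - q i) ⬝ᵥ (C.map Complex.im).mulVec (fun i => x i - q i)) := by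
      have hv : (x - q) = fun i => x i - q i := rfl
      rw [hv, hAdef, Matrix.smul_mulVec, dotProduct_smul, smul_eq_mul]
    rw [hA]
    norm_num
    field_simp
    ring
  calc ∫ x : Fin d → ℝ, ‖gwp d ε q p C ζ x‖ ^ 2
      = ∫ x : Fin d → ℝ,
          Real.exp (-((x - q) ⬝ᵥ A.mulVec (x - q))) * Real.exp (-2 * ζ.im / ε) := by
        simp_rw [hpt]
    _ = (∫ x : Fin d → ℝ, Real.exp (-((x - q) ⬝ᵥ A.mulVec (x - q)))) *
          Real.exp (-2 * ζ.im / ε) := integral_mul_const _ _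
    _ = (∫ y : Fin d → ℝ, Real.exp (-(y ⬝ᵥ A.mulVec y))) * Real.exp (-2 * ζ.im / ε) := by
        rw [integral_sub_right_eq_self (fun y => Real.exp (-(y ⬝ᵥ A.mulVec y))) q]
    _ = (Real.sqrt Real.pi ^ d / Real.sqrt A.det) * Real.exp (-2 * ζ.im / ε) := by
        rw [gwp_aux_integral_exp_neg_quad hApos]
    _ = Real.exp (-2 * ζ.im / ε) *
          (Real.sqrt Real.pi ^ d / Real.sqrt ((ε⁻¹) ^ d * (C.map Complex.im).det)) := by
        rw [hAdef, Matrix.det_smul]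
        simp [mul_comm]

/-- The phase update `ζ_I^{n+1} = ζ_I^n + (ε/2)(ln|det Q^{n+1}| − ln|det Qⁿ|)` holds
iff the `L²`-norms of the two Gaussian wave packets agree. -/
theorem gwp_phase_update_iff_norm_conservation
    {d : ℕ} (ε : ℝ) (hε : 0 < ε)
    (q0 p0 q1 p1 : Fin d → ℝ)
    (C0 C1 : Matrix (Fin d) (Fin d) ℂ) (ζ0 ζ1 : ℂ)
    (hC0symm : C0ᵀ = C0) (hC1symm : C1ᵀ = C1)
    (hC0Ipos : (C0.map Complex.im).PosDef) (hC1Ipos : (C1.map Complex.im).PosDef)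
    (Q0 Q1 : Matrix (Fin d) (Fin d) ℂ)
    (hQ0 : IsUnit Q0.det) (hQ1 : IsUnit Q1.det)
    (hQ0C : (C0.map Complex.im).map ((↑) : ℝ → ℂ) = (Q0 * Q0ᴴ)⁻¹)
    (hQ1C : (C1.map Complex.im).map ((↑) : ℝ → ℂ) = (Q1 * Q1ᴴ)⁻¹) :
    ζ1.im = ζ0.im + (ε / 2) * (Real.log ‖Q1.det‖ - Real.log ‖Q0.det‖)
      ↔ (∫ x : Fin d → ℝ, ‖gwp d ε q0 p0 C0 ζ0 x‖ ^ 2)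
          = ∫ x : Fin d → ℝ, ‖gwp d ε q1 p1 C1 ζ1 x‖ ^ 2 := by
  have hdetC : ∀ (C : Matrix (Fin d) (Fin d) ℂ) (Q : Matrix (Fin d) (Fin d) ℂ),
      IsUnit Q.det → (C.map Complex.im).map ((↑) : ℝ → ℂ) = (Q * Qᴴ)⁻¹ →
      (C.map Complex.im).det = ((‖Q.det‖)⁻¹) ^ 2 := by
    intro C Q hQ hQC
    have h1 : (((C.map Complex.im).det : ℝ) : ℂ) = ((Q * Qᴴ)⁻¹).det := by
      rw [← hQC,
        show (C.map Complex.im).map ((↑) : ℝ → ℂ)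
          = Complex.ofRealHom.mapMatrix (C.map Complex.im) from rfl,
        ← RingHom.map_det]
      rfl
    rw [Matrix.det_nonsing_inv, Matrix.det_mul, Matrix.det_conjTranspose,
      Ring.inverse_eq_inv'] at h1
    have h2 : Q.det * star Q.det = ((‖Q.det‖ ^ 2 : ℝ) : ℂ) := by
      rw [show (star Q.det) = (starRingEnd ℂ) Q.det from rfl, Complex.mul_conj,
        Complex.sq_norm]
    rw [h2] at h1
    have h4 : (((‖Q.det‖)⁻¹ ^ 2 : ℝ) : ℂ)
        = (((‖Q.det‖ ^ 2 : ℝ) : ℂ))⁻¹ := by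
      push_cast; ring
    exact Complex.ofReal_injective (h1.trans h4.symm)
  have ha0 : 0 < ‖Q0.det‖ := by
    simpa using hQ0.ne_zero
  have ha1 : 0 < ‖Q1.det‖ := by
    simpa using hQ1.ne_zero
  have h0 := gwp_l2 ε hε q0 p0 C0 ζ0 hC0Ipos
  have h1 := gwp_l2 ε hε q1 p1 C1 ζ1 hC1Ipos
  rw [h0, h1, hdetC C0 Q0 hQ0 hQ0C, hdetC C1 Q1 hQ1 hQ1C]
  have hsq : ∀ a : ℝ, 0 < a → Real.sqrt ((ε⁻¹) ^ d * (a⁻¹) ^ 2)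
      = Real.sqrt ((ε⁻¹) ^ d) * a⁻¹ := by
    intro a ha
    rw [Real.sqrt_mul (by positivity), Real.sqrt_sq (by positivity)]
  rw [hsq _ ha0, hsq _ ha1]
  set c : ℝ := Real.sqrt Real.pi ^ d / Real.sqrt ((ε⁻¹) ^ d) with hc
  have hcpos : 0 < c := by
    rw [hc]
    positivity
  have hrw : ∀ (ζ : ℂ) (a : ℝ), 0 < a →
      Real.exp (-2 * ζ.im / ε) * (Real.sqrt Real.pi ^ d / (Real.sqrt ((ε⁻¹) ^ d) * a⁻¹))
        = Real.exp (-2 * ζ.im / ε + Real.log a) * c := by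
    intro ζ a ha
    rw [Real.exp_add, Real.exp_log ha, hc]
    field_simp
  rw [hrw ζ0 _ ha0, hrw ζ1 _ ha1]
  rw [mul_left_inj' hcpos.ne', Real.exp_eq_exp]
  constructor
  · intro h
    field_simp at h ⊢
    linarith
  · intro h
    field_simp at h ⊢
    linarith
end
end

section
/- Let I ⊆ ℝ be an open interval, let S₁, S₂, S₃ : I → ℂ^{d×d} be continuous, and let Q, P : I → ℂ^{d×d} be differentiable with Q(t) invertible for all t ∈ I, satisfying the linear system Q'(t) = S₁(t) Q(t) + S₂(t) P(t) and P'(t) = −S₃(t) Q(t) − S₁(t)ᵀ P(t). Then C := P Q⁻¹ is differentiable on I and satisfies the Riccati-type equation C'(t) = −(S₃(t) + S₁(t)ᵀ C(t) + C(t) S₁(t) + C(t) S₂(t) C(t)). -/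
open Matrix

noncomputable section

attribute [local instance] Matrix.linftyOpNormedAddCommGroup Matrix.linftyOpNormedSpace
  Matrix.linftyOpNormedRing Matrix.linftyOpNormedAlgebra

namespace RiccatiAux

variable {d : ℕ}

/-- The continuous linear equivalence between pi types and matrices. -/
def eqv (d : ℕ) : (Fin d → Fin d → ℂ) ≃L[ℝ] Matrix (Fin d) (Fin d) ℂ :=
  (Matrix.ofLinearEquiv ℝ).toContinuousLinearEquiv

lemma hasDerivAt_matrix_iff {f : ℝ → Matrix (Fin d) (Fin d) ℂ}
    {f' : Matrix (Fin d) (Fin d) ℂ} {t : ℝ} :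
    HasDerivAt f f' t ↔ ∀ i j, HasDerivAt (fun s => f s i j) (f' i j) t := by
  constructor
  · intro h i j
    have h1 := ((eqv d).symm.hasFDerivAt (x := f t)).comp_hasDerivAt t h
    exact hasDerivAt_pi.1 (hasDerivAt_pi.1 h1 i) j
  · intro h
    have h1 : HasDerivAt (fun s => (fun i j => f s i j)) (fun i j => f' i j) t :=
      hasDerivAt_pi.2 fun i => hasDerivAt_pi.2 fun j => h i j
    have h2 := ((eqv d).hasFDerivAt (x := fun i j => f t i j)).comp_hasDerivAt t h1
    exact h2

end RiccatiAux

open RiccatiAux in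
/-- If `(Q, P)` solve the linear Hagedorn system `Q' = S₁ Q + S₂ P`,
`P' = −S₃ Q − S₁ᵀ P` with `Q(t)` invertible on an open interval `I`, then
`C = P Q⁻¹` is differentiable on `I` and satisfies the Riccati equation
`C' = −(S₃ + S₁ᵀ C + C S₁ + C S₂ C)`. -/
theorem riccati_from_linear_system
    {d : ℕ} (I : Set ℝ) (hIopen : IsOpen I) (hIconn : I.OrdConnected)
    (S₁ S₂ S₃ : ℝ → Matrix (Fin d) (Fin d) ℂ)
    (hS₁ : ContinuousOn S₁ I) (hS₂ : ContinuousOn S₂ I) (hS₃ : ContinuousOn S₃ I)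
    (Q P Q' P' : ℝ → Matrix (Fin d) (Fin d) ℂ)
    (hQdiff : ∀ t ∈ I, ∀ i j, HasDerivAt (fun s => Q s i j) (Q' t i j) t)
    (hPdiff : ∀ t ∈ I, ∀ i j, HasDerivAt (fun s => P s i j) (P' t i j) t)
    (hQinv : ∀ t ∈ I, IsUnit (Q t).det)
    (hQeq : ∀ t ∈ I, Q' t = S₁ t * Q t + S₂ t * P t)
    (hPeq : ∀ t ∈ I, P' t = -(S₃ t * Q t) - (S₁ t)ᵀ * P t) :
    ∀ t ∈ I, ∀ i j,
      HasDerivAt (fun s => (P s * (Q s)⁻¹) i j)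
        ((-(S₃ t + (S₁ t)ᵀ * (P t * (Q t)⁻¹) + (P t * (Q t)⁻¹) * S₁ t
            + (P t * (Q t)⁻¹) * S₂ t * (P t * (Q t)⁻¹))) i j) t := by
  intro t ht
  -- matrix-valued derivatives
  have hQ : HasDerivAt Q (Q' t) t := hasDerivAt_matrix_iff.2 (hQdiff t ht)
  have hP : HasDerivAt P (P' t) t := hasDerivAt_matrix_iff.2 (hPdiff t ht)
  -- the unit
  have hu : IsUnit (Q t) := (Matrix.isUnit_iff_isUnit_det _).2 (hQinv t ht)
  obtain ⟨u, hu⟩ := hu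
  have huinv : (↑u⁻¹ : Matrix (Fin d) (Fin d) ℂ) = (Q t)⁻¹ := by
    rw [Matrix.nonsing_inv_eq_ringInverse, ← hu, Ring.inverse_unit]
  -- derivative of the inverse
  have hinv0 : HasDerivAt (fun s => Ring.inverse (Q s))
      (-((Q t)⁻¹ * Q' t * (Q t)⁻¹)) t := by
    have hf : HasFDerivAt (Ring.inverse (M₀ := Matrix (Fin d) (Fin d) ℂ))
        (-(ContinuousLinearMap.mulLeftRight ℝ (Matrix (Fin d) (Fin d) ℂ) ↑u⁻¹ ↑u⁻¹)) (Q t) :=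
      hu ▸ hasFDerivAt_ringInverse (𝕜 := ℝ) u
    have := hf.comp_hasDerivAt t hQ
    simp [huinv, Function.comp, ContinuousLinearMap.mulLeftRight_apply] at this
    exact this
  have hinv : HasDerivAt (fun s => (Q s)⁻¹) (-((Q t)⁻¹ * Q' t * (Q t)⁻¹)) t := by
    simpa [Matrix.nonsing_inv_eq_ringInverse] using hinv0
  -- product rule
  have hC : HasDerivAt (fun s => P s * (Q s)⁻¹)
      (P' t * (Q t)⁻¹ + P t * -((Q t)⁻¹ * Q' t * (Q t)⁻¹)) t := hP.mul hinv
  have hQQ : Q t * (Q t)⁻¹ = 1 := Matrix.mul_nonsing_inv _ (hQinv t ht)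
  have key : P' t * (Q t)⁻¹ + P t * -((Q t)⁻¹ * Q' t * (Q t)⁻¹)
      = -(S₃ t + (S₁ t)ᵀ * (P t * (Q t)⁻¹) + (P t * (Q t)⁻¹) * S₁ t
            + (P t * (Q t)⁻¹) * S₂ t * (P t * (Q t)⁻¹)) := by
    rw [hPeq t ht, hQeq t ht]
    have h1 : (Q t)⁻¹ * Q t = 1 := Matrix.nonsing_inv_mul _ (hQinv t ht)
    noncomm_ring [h1, hQQ]
  rw [← key]
  exact fun i j => hasDerivAt_matrix_iff.1 hC i j
end
end

section
/- Let u be a Gaussian wave packet on ℝ² with parameters (q, p, C, ζ) for some ε > 0, and let θ ∈ ℝ. Then ∫_{ℝ²} sin(x₁ + x₂ + θ) |u(x)|² dx = π ε · (det C_I)^{−1/2} · exp(−(2/ε) ζ_I − (ε/4) 𝟙ᵀ C_I⁻¹ 𝟙) · sin(q₁ + q₂ + θ), where 𝟙 = (1, 1)ᵀ ∈ ℝ². -/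
open MeasureTheory Matrix Complex

noncomputable section

lemma aux_gauss1 {α : ℝ} (hα : 0 < α) (γ δ : ℂ) :
    ∫ x : ℝ, Complex.exp (↑(-α) * (x:ℂ) ^ 2 + γ * x + δ)
      = (Real.sqrt (Real.pi / α) : ℂ) * Complex.exp (δ + γ ^ 2 / (4 * α)) := by
  have hb : ((-α : ℝ) : ℂ).re < 0 := by simpa using hα
  rw [integral_cexp_quadratic hb γ δ]
  congr 1
  · rw [Real.sqrt_eq_rpow,
      Complex.ofReal_cpow (le_of_lt (div_pos Real.pi_pos hα))]
    push_cast
    norm_num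
  · congr 1
    have : ((-α : ℝ) : ℂ) = -(α : ℂ) := by push_cast; ring
    rw [this]
    ring

lemma aux_sq_I (u : ℂ) : (u + I) ^ 2 = u ^ 2 + 2 * u * I - 1 := by
  have h : (u + I) ^ 2 = u ^ 2 + 2 * u * I + I ^ 2 := by ring
  rw [h, Complex.I_sq]; ring

lemma aux_I_mul_sq (k : ℂ) : (I * k) ^ 2 = -(k ^ 2) := by
  rw [mul_pow, Complex.I_sq]; ring

lemma im_exp_canon (P t : ℝ) :
    (Complex.exp ((P : ℂ) + (t : ℂ) * I)).im = Real.exp P * Real.sin t := by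
  rw [Complex.exp_im]
  simp

lemma im_aux (r1 r2 P t : ℝ) :
    (((r1 : ℝ) : ℂ) * (((r2 : ℝ) : ℂ) * Complex.exp ((P : ℂ) + (t : ℂ) * I))).im
      = r1 * r2 * (Real.exp P * Real.sin t) := by
  rw [Complex.mul_im, Complex.mul_im, Complex.exp_im, Complex.exp_re]
  simp
  ring

set_option maxHeartbeats 1000000 in
/-- Explicit trigonometric Gaussian average in dimension two:
`∫ sin(x₁+x₂+θ)|u|² dx
  = πε (det C_I)^{-1/2} exp(−(2/ε)ζ_I − (ε/4) 𝟙ᵀ C_I⁻¹ 𝟙) sin(q₁+q₂+θ)`. -/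
theorem gwp_sine_average_2d
    (ε : ℝ) (hε : 0 < ε) (q p : Fin 2 → ℝ)
    (C : Matrix (Fin 2) (Fin 2) ℂ) (ζ : ℂ)
    (hCsymm : Cᵀ = C)
    (hCIpos : (C.map Complex.im).PosDef)
    (θ : ℝ) :
    ∫ x : Fin 2 → ℝ, Real.sin (x 0 + x 1 + θ) * ‖gwp 2 ε q p C ζ x‖ ^ 2
      = Real.pi * ε * ((C.map Complex.im).det) ^ (-(1 / 2 : ℝ))
          * Real.exp (-(2 / ε) * ζ.im
              - (ε / 4) * ((fun _ : Fin 2 => (1 : ℝ)) ⬝ᵥ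
                  ((C.map Complex.im)⁻¹.mulVec fun _ : Fin 2 => (1 : ℝ))))
          * Real.sin (q 0 + q 1 + θ) := by
  have hε' : (ε : ℝ) ≠ 0 := ne_of_gt hε
  have hsym : (C 1 0).im = (C 0 1).im := by
    have h : Cᵀ 0 1 = C 0 1 := congrFun (congrFun hCsymm 0) 1
    rw [Matrix.transpose_apply] at h
    rw [h]
  set a := (C 0 0).im with ha_def
  set b2 := (C 0 1).im with hb_def
  set c2 := (C 1 1).im with hc_def
  -- positivity facts
  have ha : 0 < a := by
    have h := hCIpos.dotProduct_mulVec_pos (x := ![1, 0]) (by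
      intro hcon
      have := congrFun hcon 0
      simp at this)
    simpa [Matrix.mulVec, dotProduct, Fin.sum_univ_two, Matrix.map_apply] using h
  have hc : 0 < c2 := by
    have h := hCIpos.dotProduct_mulVec_pos (x := ![0, 1]) (by
      intro hcon
      have := congrFun hcon 1
      simp at this)
    simpa [Matrix.mulVec, dotProduct, Fin.sum_univ_two, Matrix.map_apply] using h
  have hdetA : (C.map Complex.im).det = a * c2 - b2 * b2 := by
    rw [Matrix.det_fin_two]
    simp [Matrix.map_apply, hsym]
    rfl
  have hD : 0 < a * c2 - b2 * b2 := by
    have := hCIpos.det_pos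
    rwa [hdetA] at this
  have hD' : a * c2 - b2 * b2 ≠ 0 := ne_of_gt hD
  have hc' : c2 ≠ 0 := ne_of_gt hc
  have hεC : (ε : ℂ) ≠ 0 := Complex.ofReal_ne_zero.2 hε'
  have hcC : (c2 : ℂ) ≠ 0 := Complex.ofReal_ne_zero.2 hc'
  have hDC : (a : ℂ) * (c2 : ℂ) - (b2 : ℂ) * (b2 : ℂ) ≠ 0 := by
    intro h
    apply hD'
    exact_mod_cast h
  -- norm of the wave packet
  have hnorm : ∀ x : Fin 2 → ℝ, ‖gwp 2 ε q p C ζ x‖ ^ 2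
      = Real.exp ((-(a * (x 0 - q 0) ^ 2 + 2 * b2 * (x 0 - q 0) * (x 1 - q 1)
          + c2 * (x 1 - q 1) ^ 2) - 2 * ζ.im) / ε) := by
    intro x
    rw [gwp, Complex.norm_exp, ← Real.exp_nat_mul]
    congr 1
    rw [div_eq_mul_inv, ← Complex.ofReal_inv]
    simp only [dotProduct, Matrix.mulVec, Fin.sum_univ_two, Complex.mul_re, Complex.mul_im,
      Complex.add_re, Complex.add_im, Complex.I_re, Complex.I_im, Complex.ofReal_re,
      Complex.ofReal_im, Complex.one_re, Complex.one_im, Complex.div_re, Complex.div_im,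
      Complex.normSq_ofNat, Complex.ofReal_sub]
    simp only [Complex.sub_re, Complex.sub_im, Complex.ofReal_re, Complex.ofReal_im,
      Complex.re_ofNat, Complex.im_ofNat]
    rw [hsym]
    field_simp
    ring
  -- the complex integrands
  set G : ℝ × ℝ → ℂ := fun v => Complex.exp
      ((((-(a * (v.1 - q 0) ^ 2 + 2 * b2 * (v.1 - q 0) * (v.2 - q 1)
          + c2 * (v.2 - q 1) ^ 2) - 2 * ζ.im) / ε : ℝ) : ℂ)
        + ((v.1 + v.2 + θ : ℝ) : ℂ) * I) with hGdef
  set F : ℝ × ℝ → ℂ := fun v => Complex.exp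
      ((↑(-(c2 / ε)) : ℂ) * (v.2 : ℂ) ^ 2
        + ((↑(-(2 * b2 / ε)) : ℂ) * (v.1 : ℂ) + I) * (v.2 : ℂ)
        + ((↑(-(a / ε)) : ℂ) * (v.1 : ℂ) ^ 2 + I * (v.1 : ℂ)
            + (I * ((q 0 + q 1 + θ : ℝ) : ℂ) + (↑(-(2 * ζ.im) / ε) : ℂ)))) with hFdef
  have hGF : ∀ v : ℝ × ℝ, G v = F (v - (q 0, q 1)) := by
    intro v
    simp only [hGdef, hFdef, Prod.fst_sub, Prod.snd_sub]
    congr 1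
    push_cast
    field_simp
    ring
  -- continuity and integrability of F
  have hFcont : Continuous F := by
    rw [hFdef]
    fun_prop
  have hFint2 : Integrable F ((volume : Measure ℝ).prod volume) := by
    refine (integrable_prod_iff ?_).2 ⟨?_, ?_⟩
    · exact (hFcont.aestronglyMeasurable).mono_measure (le_of_eq (Measure.volume_eq_prod ℝ ℝ).symm)
    · refine Filter.Eventually.of_forall fun x => ?_
      have hre : ((↑(-(c2 / ε)) : ℂ)).re < 0 := by
        simpa using div_pos hc hε
      simpa only [hFdef] using integrable_cexp_quadratic' hre
        ((↑(-(2 * b2 / ε)) : ℂ) * (x : ℂ) + I)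
        ((↑(-(a / ε)) : ℂ) * (x : ℂ) ^ 2 + I * (x : ℂ)
          + (I * ((q 0 + q 1 + θ : ℝ) : ℂ) + (↑(-(2 * ζ.im) / ε) : ℂ)))
    · have hnormF : ∀ x y : ℝ, ‖F (x, y)‖
          = Real.exp (-(c2 / ε) * (y + b2 * x / c2) ^ 2)
            * Real.exp (-((a * c2 - b2 * b2) / (c2 * ε)) * x ^ 2 + -(2 * ζ.im) / ε) := by
        intro x y
        rw [hFdef]
        simp only [Complex.norm_exp, ← Real.exp_add]
        congr 1
        simp only [pow_two, Complex.mul_re, Complex.add_re, Complex.mul_im, Complex.add_im,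
          Complex.I_re, Complex.I_im, Complex.ofReal_re, Complex.ofReal_im]
        field_simp
        ring
      simp_rw [hnormF]
      have hx : ∀ x : ℝ, ∫ y : ℝ, Real.exp (-(c2 / ε) * (y + b2 * x / c2) ^ 2)
            * Real.exp (-((a * c2 - b2 * b2) / (c2 * ε)) * x ^ 2 + -(2 * ζ.im) / ε)
          = Real.sqrt (Real.pi / (c2 / ε))
            * Real.exp (-((a * c2 - b2 * b2) / (c2 * ε)) * x ^ 2 + -(2 * ζ.im) / ε) := by
        intro x
        rw [integral_mul_const]
        congr 1
        have := integral_add_right_eq_self (μ := (volume : Measure ℝ))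
          (fun z : ℝ => Real.exp (-(c2 / ε) * z ^ 2)) (b2 * x / c2)
        rw [this, integral_gaussian]
      simp_rw [hx, Real.exp_add]
      have hk : 0 < (a * c2 - b2 * b2) / (c2 * ε) := div_pos hD (mul_pos hc hε)
      exact (((integrable_exp_neg_mul_sq hk).mul_const _).const_mul _)
  have hFint : Integrable F (volume : Measure (ℝ × ℝ)) := by
    rw [Measure.volume_eq_prod]; exact hFint2
  have hGint : Integrable G (volume : Measure (ℝ × ℝ)) := by
    have h : G = fun v => F (v - (q 0, q 1)) := funext hGF
    rw [h]
    exact hFint.comp_sub_right _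
  -- reduce to the complex integral
  have step1 : (fun x : Fin 2 → ℝ => Real.sin (x 0 + x 1 + θ) * ‖gwp 2 ε q p C ζ x‖ ^ 2)
      = fun x : Fin 2 → ℝ => (G (x 0, x 1)).im := by
    funext x
    rw [hnorm x, hGdef]
    simp only
    rw [im_exp_canon]
    ring
  rw [step1]
  have htr : ∫ x : Fin 2 → ℝ, (G (x 0, x 1)).im = ∫ v : ℝ × ℝ, (G v).im :=
    (volume_preserving_finTwoArrow ℝ).integral_comp
      (MeasurableEquiv.measurableEmbedding _) fun v : ℝ × ℝ => (G v).im
  have him2 : ∫ v : ℝ × ℝ, (G v).im = (∫ v : ℝ × ℝ, G v).im := by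
    simpa using integral_im hGint
  rw [htr, him2]
  have hshift : ∫ v : ℝ × ℝ, G v = ∫ v : ℝ × ℝ, F v := by
    have h : G = fun v => F (v - (q 0, q 1)) := funext hGF
    rw [h]
    exact integral_sub_right_eq_self F (q 0, q 1)
  rw [hshift]
  -- compute ∫ F by Fubini
  have hFub : ∫ v : ℝ × ℝ, F v = ∫ x : ℝ, ∫ y : ℝ, F (x, y) := by
    rw [Measure.volume_eq_prod, integral_prod _ hFint2]
  rw [hFub]
  have hinner : ∀ x : ℝ, (∫ y : ℝ, F (x, y))
      = (Real.sqrt (Real.pi / (c2 / ε)) : ℂ)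
        * Complex.exp ((↑(-((a * c2 - b2 * b2) / (c2 * ε))) : ℂ) * (x : ℂ) ^ 2
            + (I * ((((c2 - b2) / c2 : ℝ)) : ℂ)) * (x : ℂ)
            + (I * ((q 0 + q 1 + θ : ℝ) : ℂ)
                + (↑(-(2 * ζ.im) / ε - ε / (4 * c2)) : ℂ))) := by
    intro x
    simp only [hFdef]
    rw [aux_gauss1 (div_pos hc hε)]
    congr 2
    rw [aux_sq_I]
    have hden : (4:ℂ) * ((c2/ε : ℝ) : ℂ) = ((4*(c2/ε) : ℝ) : ℂ) := by push_cast; ring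
    rw [hden]
    apply Complex.ext <;>
      simp only [Complex.add_re, Complex.add_im, Complex.sub_re, Complex.sub_im, Complex.mul_re,
        Complex.mul_im, Complex.I_re, Complex.I_im, Complex.ofReal_re, Complex.ofReal_im,
        Complex.div_ofReal_re, Complex.div_ofReal_im, Complex.one_re, Complex.one_im, pow_two,
        Complex.re_ofNat, Complex.im_ofNat, Complex.neg_re, Complex.neg_im] <;>
      (field_simp; try ring)
  simp_rw [hinner]
  rw [integral_const_mul]
  have houter : (∫ x : ℝ, Complex.exp ((↑(-((a * c2 - b2 * b2) / (c2 * ε))) : ℂ) * (x : ℂ) ^ 2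
            + (I * ((((c2 - b2) / c2 : ℝ)) : ℂ)) * (x : ℂ)
            + (I * ((q 0 + q 1 + θ : ℝ) : ℂ)
                + (↑(-(2 * ζ.im) / ε - ε / (4 * c2)) : ℂ))))
      = (Real.sqrt (Real.pi / ((a * c2 - b2 * b2) / (c2 * ε))) : ℂ)
        * Complex.exp ((↑(-(2 * ζ.im) / ε - ε * (a + c2 - 2 * b2) / (4 * (a * c2 - b2 * b2))) : ℂ)
            + ((q 0 + q 1 + θ : ℝ) : ℂ) * I) := by
    rw [aux_gauss1 (div_pos hD (mul_pos hc hε))]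
    have hD2 : c2 * a - b2 ^ 2 ≠ 0 := by intro h; apply hD'; linarith [h]
    congr 2
    rw [aux_I_mul_sq]
    have hden : (4:ℂ) * (((a * c2 - b2 * b2) / (c2 * ε) : ℝ) : ℂ)
        = ((4*((a * c2 - b2 * b2) / (c2 * ε)) : ℝ) : ℂ) := by push_cast; ring
    rw [hden]
    apply Complex.ext <;>
      simp only [Complex.add_re, Complex.add_im, Complex.sub_re, Complex.sub_im, Complex.mul_re,
        Complex.mul_im, Complex.I_re, Complex.I_im, Complex.ofReal_re, Complex.ofReal_im,
        Complex.div_ofReal_re, Complex.div_ofReal_im, Complex.one_re, Complex.one_im, pow_two,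
        Complex.re_ofNat, Complex.im_ofNat, Complex.neg_re, Complex.neg_im] <;>
      (field_simp; try ring)
  rw [houter]
  rw [im_aux]
  -- final numerics
  have hsqrt : Real.sqrt (Real.pi / (c2 / ε)) * Real.sqrt (Real.pi / ((a * c2 - b2 * b2) / (c2 * ε)))
      = Real.pi * ε * ((C.map Complex.im).det) ^ (-(1 / 2 : ℝ)) := by
    rw [hdetA, ← Real.sqrt_mul (by positivity)]
    have h1 : Real.pi / (c2 / ε) * (Real.pi / ((a * c2 - b2 * b2) / (c2 * ε)))
        = (Real.pi * ε) ^ 2 / (a * c2 - b2 * b2) := by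
      field_simp
    rw [h1, Real.sqrt_div (by positivity), Real.sqrt_sq (by positivity),
      Real.rpow_neg hD.le, ← Real.sqrt_eq_rpow]
    ring
  have hdot : (fun _ : Fin 2 => (1 : ℝ)) ⬝ᵥ ((C.map Complex.im)⁻¹.mulVec fun _ : Fin 2 => (1 : ℝ))
      = (a + c2 - 2 * b2) / (a * c2 - b2 * b2) := by
    rw [Matrix.inv_def, Matrix.adjugate_fin_two, Matrix.det_fin_two]
    simp only [Matrix.map_apply, hsym, dotProduct, Matrix.mulVec, Fin.sum_univ_two,
      Matrix.smul_apply, Matrix.cons_val', Matrix.cons_val_zero, Matrix.cons_val_one,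
      Matrix.head_cons, Matrix.head_fin_const, Matrix.empty_val', Matrix.cons_val_fin_one,
      smul_eq_mul, Ring.inverse_eq_inv', Matrix.of_apply]
    field_simp
    ring
  have hexp : -(2 * ζ.im) / ε - ε * (a + c2 - 2 * b2) / (4 * (a * c2 - b2 * b2))
      = -(2 / ε) * ζ.im - ε / 4 * ((fun _ : Fin 2 => (1 : ℝ)) ⬝ᵥ
          ((C.map Complex.im)⁻¹.mulVec fun _ : Fin 2 => (1 : ℝ))) := by
    rw [hdot]
    field_simp
    try ring
  rw [hsqrt, hexp]
  try ring
end
end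

section
/- Let b, v⁻ ∈ ℝ³ and τ ∈ ℝ. Then the vector v⁺ := v⁻ + (v⁻ + v⁻ × ((τ/2) b)) × (τ b / (1 + |τ b / 2|²)) is the unique vector in ℝ³ satisfying the implicit Boris relation v⁺ − v⁻ = (τ/2) (v⁺ + v⁻) × b. -/
open Matrix

noncomputable section

lemma boris_aux (b u : Fin 3 → ℝ) (c k : ℝ)
    (hk : k * (1 + c ^ 2 * (b 0 * b 0 + b 1 * b 1 + b 2 * b 2)) = 2 * c) :
    (u + crossProduct (u + crossProduct u (c • b)) (k • b)) - u
      = c • crossProduct ((u + crossProduct (u + crossProduct u (c • b)) (k • b)) + u) b := by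
  funext i
  fin_cases i <;>
    · simp only [crossProduct, Pi.add_apply, Pi.sub_apply, Pi.smul_apply, smul_eq_mul,
        LinearMap.mk₂_apply]
      simp
      first
      | linear_combination (u 1 * b 2 - u 2 * b 1) * hk
      | linear_combination (u 2 * b 0 - u 0 * b 2) * hk
      | linear_combination (u 0 * b 1 - u 1 * b 0) * hk

/-- The explicit Boris update
`v⁺ = v⁻ + (v⁻ + v⁻ × (τ/2) b) × (τ b / (1 + |τ b/2|²))`
is the unique solution of the implicit Boris relation
`v⁺ − v⁻ = (τ/2)(v⁺ + v⁻) × b`. -/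
theorem boris_rotation_explicit
    (b vminus : Fin 3 → ℝ) (τ : ℝ) :
    (vminus + crossProduct (vminus + crossProduct vminus ((τ / 2) • b))
          ((τ / (1 + (τ / 2) ^ 2 * (b ⬝ᵥ b))) • b))
        - vminus
      = (τ / 2) • crossProduct
          ((vminus + crossProduct (vminus + crossProduct vminus ((τ / 2) • b))
              ((τ / (1 + (τ / 2) ^ 2 * (b ⬝ᵥ b))) • b))
            + vminus) b
    ∧ ∀ w : Fin 3 → ℝ,
        w - vminus = (τ / 2) • crossProduct (w + vminus) b →
        w = vminus + crossProduct (vminus + crossProduct vminus ((τ / 2) • b))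
              ((τ / (1 + (τ / 2) ^ 2 * (b ⬝ᵥ b))) • b) := by
  have hbb : b ⬝ᵥ b = b 0 * b 0 + b 1 * b 1 + b 2 * b 2 := by
    simp [dotProduct, Fin.sum_univ_three]
  have hDpos : 0 < 1 + (τ / 2) ^ 2 * (b ⬝ᵥ b) := by
    nlinarith [sq_nonneg (τ/2), mul_self_nonneg (b 0), mul_self_nonneg (b 1),
      mul_self_nonneg (b 2), sq_nonneg ((τ/2) * b 0), sq_nonneg ((τ/2) * b 1),
      sq_nonneg ((τ/2) * b 2)]
  have hD : 1 + (τ / 2) ^ 2 * (b ⬝ᵥ b) ≠ 0 := ne_of_gt hDpos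
  have hk : (τ / (1 + (τ / 2) ^ 2 * (b ⬝ᵥ b)))
      * (1 + (τ / 2) ^ 2 * (b 0 * b 0 + b 1 * b 1 + b 2 * b 2)) = 2 * (τ / 2) := by
    rw [← hbb, div_mul_cancel₀ τ hD]; ring
  have hp := boris_aux b vminus (τ / 2) (τ / (1 + (τ / 2) ^ 2 * (b ⬝ᵥ b))) hk
  refine ⟨hp, fun w h => ?_⟩
  set vplus := vminus + crossProduct (vminus + crossProduct vminus ((τ / 2) • b))
      ((τ / (1 + (τ / 2) ^ 2 * (b ⬝ᵥ b))) • b) with hvp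
  have h0 := congrFun h 0
  have h1 := congrFun h 1
  have h2 := congrFun h 2
  have hp0 := congrFun hp 0
  have hp1 := congrFun hp 1
  have hp2 := congrFun hp 2
  simp only [crossProduct, Pi.add_apply, Pi.sub_apply, Pi.smul_apply, smul_eq_mul,
    LinearMap.mk₂_apply, Matrix.cons_val_zero, Matrix.cons_val_one, Matrix.head_cons,
    Matrix.cons_val_two, Matrix.tail_cons] at h0 h1 h2 hp0 hp1 hp2
  have hd0 : w 0 - vplus 0 = τ / 2 * ((w 1 - vplus 1) * b 2 - (w 2 - vplus 2) * b 1) := by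
    linear_combination h0 - hp0
  have hd1 : w 1 - vplus 1 = τ / 2 * ((w 2 - vplus 2) * b 0 - (w 0 - vplus 0) * b 2) := by
    linear_combination h1 - hp1
  have hd2 : w 2 - vplus 2 = τ / 2 * ((w 0 - vplus 0) * b 1 - (w 1 - vplus 1) * b 0) := by
    linear_combination h2 - hp2
  have hDpos' : 0 < 1 + (τ/2)^2 * (b 0 * b 0 + b 1 * b 1 + b 2 * b 2) := by
    rw [← hbb]; exact hDpos
  have e0 : (1 + (τ/2)^2 * (b 0 * b 0 + b 1 * b 1 + b 2 * b 2)) * (w 0 - vplus 0) = 0 := by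
    linear_combination (1 + (τ/2)^2 * b 0 * b 0) * hd0
      + ((τ/2) * b 2 + (τ/2)^2 * b 0 * b 1) * hd1
      + (-(τ/2) * b 1 + (τ/2)^2 * b 0 * b 2) * hd2
  have e1 : (1 + (τ/2)^2 * (b 0 * b 0 + b 1 * b 1 + b 2 * b 2)) * (w 1 - vplus 1) = 0 := by
    linear_combination (1 + (τ/2)^2 * b 1 * b 1) * hd1
      + ((τ/2) * b 0 + (τ/2)^2 * b 1 * b 2) * hd2
      + (-(τ/2) * b 2 + (τ/2)^2 * b 1 * b 0) * hd0
  have e2 : (1 + (τ/2)^2 * (b 0 * b 0 + b 1 * b 1 + b 2 * b 2)) * (w 2 - vplus 2) = 0 := by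
    linear_combination (1 + (τ/2)^2 * b 2 * b 2) * hd2
      + ((τ/2) * b 1 + (τ/2)^2 * b 2 * b 0) * hd0
      + (-(τ/2) * b 0 + (τ/2)^2 * b 2 * b 1) * hd1
  have w0 : w 0 = vplus 0 := by
    rcases mul_eq_zero.mp e0 with h' | h'
    · exact absurd h' (ne_of_gt hDpos')
    · linarith
  have w1 : w 1 = vplus 1 := by
    rcases mul_eq_zero.mp e1 with h' | h'
    · exact absurd h' (ne_of_gt hDpos')
    · linarith
  have w2 : w 2 = vplus 2 := by
    rcases mul_eq_zero.mp e2 with h' | h'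
    · exact absurd h' (ne_of_gt hDpos')
    · linarith
  funext i
  fin_cases i
  · exact w0
  · exact w1
  · exact w2
end
end
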